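/- If a strategy profile σ is minimax rationalizable, witnessed by sets Z_1, ..., Z_n, then Z_i ⊆ NSD_i^k(Γ) for every player i and every k; hence σ ∈ NSD^∞(Γ). Combined with the converse, a profile survives iterated deletion of minimax dominated strategies if and only if it is minimax rationalizable. -/

import Mathlib

open Function

section
variable {ι : Type*} [DecidableEq ι] {S : ι → Type*}

noncomputable def minv (u : ι → (∀ j, S j) → ℝ) (i : ι) (T : Set (∀ j, S j)) (σ : S i) : ℝ :=
  sInf ((fun τ => u i (Function.update τ i σ)) '' T)

noncomputable def maxv (u : ι → (∀ j, S j) → ℝ) (i : ι) (T : Set (∀ j, S j)) (σ : S i) : ℝ :=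
  sSup ((fun τ => u i (Function.update τ i σ)) '' T)

/-- `σ'` minimax dominates `σ` for player `i` w.r.t. opponent profile set `T`. -/
def MMDomBy (u : ι → (∀ j, S j) → ℝ) (i : ι) (T : Set (∀ j, S j)) (σ σ' : S i) : Prop :=
  minv u i T σ' > maxv u i T σ

def MMDom (u : ι → (∀ j, S j) → ℝ) (i : ι) (T : Set (∀ j, S j)) (σ : S i) : Prop :=
  ∃ σ' : S i, MMDomBy u i T σ σ'

/-- Opponent profiles of player `i` compatible with the product set `Z`. -/
def Opp (Z : ∀ j, Set (S j)) (i : ι) : Set (∀ j, S j) := {τ | ∀ j, j ≠ i → τ j ∈ Z j}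

/-- Iterated deletion of minimax dominated strategies. -/
noncomputable def NSD (u : ι → (∀ j, S j) → ℝ) : ℕ → ∀ i, Set (S i)
  | 0, _ => Set.univ
  | (k+1), i => {σ ∈ NSD u k i | ¬ MMDom u i (Opp (NSD u k) i) σ}


/-- `σ` is minimax rationalizable. -/
def MMRat {ι : Type*} [DecidableEq ι] {S : ι → Type*}
    (u : ι → (∀ j, S j) → ℝ) (σ : ∀ j, S j) : Prop :=
  ∃ Z : ∀ i, Set (S i), (∀ i, (Z i).Nonempty) ∧ (∀ i, σ i ∈ Z i) ∧
    ∀ i, ∀ σ' ∈ Z i, ∀ σ'' : S i, maxv u i (Opp Z i) σ' ≥ minv u i (Opp Z i) σ''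
variable {ι : Type*} [Fintype ι] [DecidableEq ι] {S : ι → Type*}
  [∀ i, Fintype (S i)] [∀ i, Nonempty (S i)]

lemma opp_nonempty (Z : ∀ j, Set (S j)) (hne : ∀ j, (Z j).Nonempty) (i : ι) :
    (Opp Z i).Nonempty :=
  ⟨fun j => (hne j).some, fun j _ => (hne j).some_mem⟩

lemma maxv_mono (u : ι → (∀ j, S j) → ℝ) (i : ι) {T T' : Set (∀ j, S j)}
    (hsub : T ⊆ T') (hT : T.Nonempty) (s : S i) : maxv u i T s ≤ maxv u i T' s :=
  csSup_le_csSup ((T'.toFinite.image _).bddAbove) (hT.image _) (Set.image_mono hsub)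

lemma minv_anti (u : ι → (∀ j, S j) → ℝ) (i : ι) {T T' : Set (∀ j, S j)}
    (hsub : T ⊆ T') (hT : T.Nonempty) (s : S i) : minv u i T' s ≤ minv u i T s :=
  csInf_le_csInf ((T'.toFinite.image _).bddBelow) (hT.image _) (Set.image_mono hsub)

lemma minv_le_maxv (u : ι → (∀ j, S j) → ℝ) (i : ι) {T : Set (∀ j, S j)}
    (hT : T.Nonempty) (s : S i) : minv u i T s ≤ maxv u i T s :=
  csInf_le_csSup (hT.image _) ((T.toFinite.image _).bddBelow) ((T.toFinite.image _).bddAbove)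

lemma nsd_succ_subset (u : ι → (∀ j, S j) → ℝ) (k : ℕ) (i : ι) :
    NSD u (k+1) i ⊆ NSD u k i := fun _ h => h.1

lemma nsd_antitone (u : ι → (∀ j, S j) → ℝ) (i : ι) {k l : ℕ} (h : k ≤ l) :
    NSD u l i ⊆ NSD u k i := by
  induction h with
  | refl => exact subset_rfl
  | step _ ih => exact (nsd_succ_subset u _ i).trans ih

lemma key (u : ι → (∀ j, S j) → ℝ) (Z : ∀ i, Set (S i)) (hne : ∀ i, (Z i).Nonempty)
    (hprop : ∀ i, ∀ σ' ∈ Z i, ∀ σ'' : S i,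
      maxv u i (Opp Z i) σ' ≥ minv u i (Opp Z i) σ'') :
    ∀ k i, Z i ⊆ NSD u k i := by
  intro k
  induction k with
  | zero => intro i s _; simp [NSD]
  | succ k ih =>
    intro i σ' hσ'
    have hsub : Opp Z i ⊆ Opp (NSD u k) i := fun τ hτ j hj => ih j (hτ j hj)
    have hO : (Opp Z i).Nonempty := opp_nonempty Z hne i
    refine ⟨ih i hσ', ?_⟩
    rintro ⟨σ'', hdom⟩
    have h1 := maxv_mono u i hsub hO σ'
    have h2 := minv_anti u i hsub hO σ''
    have h3 := hprop i σ' hσ' σ''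
    have hd : minv u i (Opp (NSD u k) i) σ'' > maxv u i (Opp (NSD u k) i) σ' := hdom
    linarith

lemma nsd_nonempty (u : ι → (∀ j, S j) → ℝ) : ∀ k i, (NSD u k i).Nonempty := by
  intro k
  induction k with
  | zero => intro i; exact ⟨Classical.arbitrary _, by simp [NSD]⟩
  | succ k ih =>
    intro i
    have hT : (Opp (NSD u k) i).Nonempty := opp_nonempty _ ih i
    obtain ⟨σs, hmax⟩ := Finite.exists_max (fun s : S i => minv u i (Opp (NSD u k) i) s)
    refine ⟨σs, ?_⟩
    suffices h : ∀ m ≤ k + 1, σs ∈ NSD u m i from h (k+1) le_rfl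
    intro m hm
    induction m with
    | zero => simp [NSD]
    | succ m ihm =>
      have hmk : m ≤ k := Nat.lt_succ_iff.mp hm
      have hsub : Opp (NSD u k) i ⊆ Opp (NSD u m) i :=
        fun τ hτ j hj => nsd_antitone u j hmk (hτ j hj)
      refine ⟨ihm (Nat.le_succ_of_le hmk), ?_⟩
      rintro ⟨σ'', hdom⟩
      have h2 := minv_anti u i hsub hT σ''
      have h3 := hmax σ''
      have h4 := minv_le_maxv u i hT σs
      have h5 := maxv_mono u i hsub hT σs
      have hd : minv u i (Opp (NSD u m) i) σ'' > maxv u i (Opp (NSD u m) i) σs := hdom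
      linarith

lemma nsd_step_congr (u : ι → (∀ j, S j) → ℝ) {k l : ℕ} (h : NSD u k = NSD u l) :
    NSD u (k+1) = NSD u (l+1) := by
  have e1 : NSD u (k+1) = fun i => {σ ∈ NSD u k i | ¬ MMDom u i (Opp (NSD u k) i) σ} := rfl
  have e2 : NSD u (l+1) = fun i => {σ ∈ NSD u l i | ¬ MMDom u i (Opp (NSD u l) i) σ} := rfl
  rw [e1, e2, h]

lemma exists_stab (u : ι → (∀ j, S j) → ℝ) :
    ∃ K : ℕ, ∀ m, K ≤ m → NSD u m = NSD u K := by
  classical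
  set f : ℕ → ℕ := fun k => ∑ i : ι, (NSD u k i).ncard with hf
  have hstep : ∀ k, NSD u (k+1) ≠ NSD u k → f (k+1) < f k := by
    intro k hne
    have hex : ∃ i, NSD u (k+1) i ≠ NSD u k i := by
      by_contra hc
      push_neg at hc
      exact hne (funext hc)
    obtain ⟨i0, hi0⟩ := hex
    refine Finset.sum_lt_sum (fun i _ => Set.ncard_le_ncard (nsd_succ_subset u k i) (Set.toFinite _)) ⟨i0, Finset.mem_univ _, ?_⟩
    exact Set.ncard_lt_ncard (HasSubset.Subset.ssubset_of_ne (nsd_succ_subset u k i0) hi0) (Set.toFinite _)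
  have hfix : ∃ k, NSD u (k+1) = NSD u k := by
    by_contra hc
    push_neg at hc
    have hdec : ∀ n, f n + n ≤ f 0 := by
      intro n
      induction n with
      | zero => simp
      | succ n ih =>
        have := hstep n (hc n)
        omega
    have := hdec (f 0 + 1)
    omega
  obtain ⟨K, hK⟩ := hfix
  refine ⟨K, ?_⟩
  intro m hm
  induction hm with
  | refl => rfl
  | @step m' h ih => exact (nsd_step_congr u ih).trans hK

theorem minimax_rationalizable_subset_nsd (u : ι → (∀ j, S j) → ℝ) (σ : ∀ j, S j)
    (Z : ∀ i, Set (S i)) (hne : ∀ i, (Z i).Nonempty) (hσ : ∀ i, σ i ∈ Z i)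
    (hprop : ∀ i, ∀ σ' ∈ Z i, ∀ σ'' : S i,
      maxv u i (Opp Z i) σ' ≥ minv u i (Opp Z i) σ'') :
    (∀ (i : ι) (k : ℕ), Z i ⊆ NSD u k i) ∧
    (∀ τ : ∀ j, S j, MMRat u τ ↔ ∀ i, τ i ∈ ⋂ k, NSD u k i) := by
  constructor
  · intro i k
    exact key u Z hne hprop k i
  · intro τ
    constructor
    · rintro ⟨Z', hne', hτ', hprop'⟩ i
      exact Set.mem_iInter.mpr fun k => key u Z' hne' hprop' k i (hτ' i)
    · intro hτ
      obtain ⟨K, hstab⟩ := exists_stab u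
      refine ⟨fun i => NSD u K i, fun i => nsd_nonempty u K i,
        fun i => (Set.mem_iInter.mp (hτ i)) K, ?_⟩
      intro i σ' hσ' σ''
      have h1 : NSD u (K+1) = NSD u K := hstab (K+1) (Nat.le_succ K)
      have hσ1 : σ' ∈ NSD u (K+1) i := by rw [h1]; exact hσ'
      have hnd : ¬ MMDom u i (Opp (NSD u K) i) σ' := hσ1.2
      exact le_of_not_gt fun hc => hnd ⟨σ'', hc⟩


end
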